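/- There do not exist points a, b, x_1, …, x_6 in ℝ³ such that ‖a − x_i‖ = 1 and ‖b − x_i‖ = 1 for all i, ‖a − b‖ > 1, and ‖x_i − x_j‖ > 1 for all i ≠ j. Equivalently, the complete bipartite graph K_{2,6} is not a marble graph. -/

import Mathlib

open Real

section Main

lemma no_six_angles (θ : Fin 6 → ℝ) (hmem : ∀ i, θ i ∈ Set.Ioc (-π) π)
    (h : ∀ i j, i ≠ j → Real.cos (θ i - θ j) < 1/3) : False := by
  set α := Real.arccos (1/3) with hα
  have hcosα : Real.cos α = 1/3 := Real.cos_arccos (by norm_num) (by norm_num)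
  have hαpi : α ≤ π := Real.arccos_le_pi _
  have hα0 : 0 ≤ α := Real.arccos_nonneg _
  have hα3 : π/3 < α := by
    by_contra hc
    push_neg at hc
    have := Real.cos_le_cos_of_nonneg_of_le_pi hα0 (by linarith [Real.pi_pos]) hc
    rw [Real.cos_pi_div_three, hcosα] at this
    norm_num at this
  have key : ∀ t : ℝ, 0 ≤ t → t < 2*π → Real.cos t < 1/3 → α < t ∧ t < 2*π - α := by
    intro t ht0 ht2 hct
    constructor
    · by_contra hc
      push_neg at hc
      have := Real.cos_le_cos_of_nonneg_of_le_pi ht0 hαpi hc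
      rw [hcosα] at this; linarith
    · by_contra hc
      push_neg at hc
      have h1 : Real.cos (2*π - t) = Real.cos t := by
        rw [Real.cos_sub, Real.cos_two_pi, Real.sin_two_pi]; ring
      have h3 : Real.cos α ≤ Real.cos (2*π - t) :=
        Real.cos_le_cos_of_nonneg_of_le_pi (by linarith) hαpi (by linarith)
      rw [hcosα, h1] at h3; linarith
  set σ := Tuple.sort θ with hσ
  set φ := θ ∘ σ with hφ
  have hmono : Monotone φ := Tuple.monotone_sort θ
  have hφmem : ∀ i, φ i ∈ Set.Ioc (-π) π := fun i => hmem _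
  have hφ' : ∀ i j : Fin 6, i ≠ j → Real.cos (φ i - φ j) < 1/3 := by
    intro i j hij
    exact h _ _ (fun hc => hij (σ.injective hc))
  have gap : ∀ i j : Fin 6, i < j → α < φ j - φ i := by
    intro i j hij
    have h0 : 0 ≤ φ j - φ i := by linarith [hmono hij.le]
    have h2 : φ j - φ i < 2*π := by
      have := (hφmem j).2; have := (hφmem i).1; linarith
    have hc : Real.cos (φ j - φ i) < 1/3 := hφ' j i (Ne.symm hij.ne)
    exact (key _ h0 h2 hc).1
  have top : φ 5 - φ 0 < 2*π - α := by
    have h0 : 0 ≤ φ 5 - φ 0 := by linarith [hmono (show (0:Fin 6) ≤ 5 by decide)]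
    have h2 : φ 5 - φ 0 < 2*π := by
      have := (hφmem 5).2; have := (hφmem 0).1; linarith
    have hc : Real.cos (φ 5 - φ 0) < 1/3 := by
      have := hφ' 5 0 (by decide); exact this
    exact (key _ h0 h2 hc).2
  have g01 := gap 0 1 (by decide)
  have g12 := gap 1 2 (by decide)
  have g23 := gap 2 3 (by decide)
  have g34 := gap 3 4 (by decide)
  have g45 := gap 4 5 (by decide)
  linarith


open scoped RealInnerProductSpace

set_option maxHeartbeats 1000000 in
/-- `K_{2,6}` is not a marble graph: there are no points `a, b ∈ ℝ³` with `‖a - b‖ > 1`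
together with 6 points `x i` at distance exactly 1 from both `a` and `b` that are
pairwise at distance greater than 1. -/
theorem k_two_six_not_marble_graph :
    ¬ ∃ (a b : EuclideanSpace ℝ (Fin 3)) (x : Fin 6 → EuclideanSpace ℝ (Fin 3)),
      (∀ i, ‖a - x i‖ = 1) ∧ (∀ i, ‖b - x i‖ = 1) ∧ 1 < ‖a - b‖ ∧
      (∀ i j, i ≠ j → 1 < ‖x i - x j‖) := by
  rintro ⟨a, b, x, ha, hb, hab, hx⟩
  set u : EuclideanSpace ℝ (Fin 3) := a - b with hu
  set m : EuclideanSpace ℝ (Fin 3) := (2:ℝ)⁻¹ • (a + b) with hm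
  set y : Fin 6 → EuclideanSpace ℝ (Fin 3) := fun i => x i - m with hy
  have hax : ∀ i, a - x i = (2:ℝ)⁻¹ • u - y i := by
    intro i; simp only [hy, hm, hu]; module
  have hbx : ∀ i, b - x i = -((2:ℝ)⁻¹ • u + y i) := by
    intro i; simp only [hy, hm, hu]; module
  -- orthogonality and norms
  have hA : ∀ i, ‖(2:ℝ)⁻¹ • u - y i‖ ^ 2 = 1 := by
    intro i; rw [← hax]; rw [ha i]; norm_num
  have hB : ∀ i, ‖(2:ℝ)⁻¹ • u + y i‖ ^ 2 = 1 := by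
    intro i
    have : ‖(2:ℝ)⁻¹ • u + y i‖ = ‖b - x i‖ := by rw [hbx i, norm_neg]
    rw [this, hb i]; norm_num
  have horth : ∀ i, ⟪u, y i⟫ = 0 := by
    intro i
    have h1 := hA i
    have h2 := hB i
    rw [norm_sub_sq_real] at h1
    rw [norm_add_sq_real] at h2
    have h3 : ⟪(2:ℝ)⁻¹ • u, y i⟫ = (2:ℝ)⁻¹ * ⟪u, y i⟫ := real_inner_smul_left _ _ _
    rw [h3] at h1 h2
    linarith
  set r2 : ℝ := 1 - ‖u‖ ^ 2 / 4 with hr2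
  have hnorm2 : ∀ i, ‖y i‖ ^ 2 = r2 := by
    intro i
    have h1 := hA i
    rw [norm_sub_sq_real, real_inner_smul_left, horth i] at h1
    have h4 : ‖(2:ℝ)⁻¹ • u‖ ^ 2 = ‖u‖ ^ 2 / 4 := by
      rw [norm_smul]; simp; ring
    rw [h4] at h1
    simp only [hr2]
    linarith
  have hu1 : 1 < ‖u‖ := hab
  have hr2lt : r2 < 3/4 := by
    have : 1 < ‖u‖ ^ 2 := by nlinarith
    simp only [hr2]; linarith
  have hr2pos : 0 < r2 := by
    have h01 : y 0 - y 1 = x 0 - x 1 := by simp [hy]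
    have h1 : (1:ℝ) < ‖y 0‖ + ‖y 1‖ := by
      have := norm_sub_le (y 0) (y 1)
      rw [h01] at this
      have := hx 0 1 (by decide)
      linarith
    have h2 := hnorm2 0
    have h3 := hnorm2 1
    nlinarith [sq_nonneg (‖y 0‖ - ‖y 1‖), sq_nonneg (‖y 0‖ + ‖y 1‖), norm_nonneg (y 0), norm_nonneg (y 1)]
  -- inner products of the y i
  have hinner : ∀ i j, i ≠ j → ⟪y i, y j⟫ < r2 - 1/2 := by
    intro i j hij
    have heq : ⟪y i, y j⟫ =
        (‖y i‖ * ‖y i‖ + ‖y j‖ * ‖y j‖ - ‖y i - y j‖ * ‖y i - y j‖) / 2 :=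
      real_inner_eq_norm_mul_self_add_norm_mul_self_sub_norm_sub_mul_self_div_two _ _
    have hyy : y i - y j = x i - x j := by simp [hy]
    have h1 : 1 < ‖x i - x j‖ := hx i j hij
    have h2 : 1 < ‖x i - x j‖ * ‖x i - x j‖ := by nlinarith [norm_nonneg (x i - x j)]
    have h3 : ‖y i‖ * ‖y i‖ = r2 := by have := hnorm2 i; nlinarith [norm_nonneg (y i)]
    have h4 : ‖y j‖ * ‖y j‖ = r2 := by have := hnorm2 j; nlinarith [norm_nonneg (y j)]
    rw [heq, hyy, h3, h4]
    linarith
  -- the y i live in the 2-dimensional orthogonal complement of u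
  have hu0 : u ≠ 0 := by
    intro h; rw [h, norm_zero] at hu1; linarith
  set K : Submodule ℝ (EuclideanSpace ℝ (Fin 3)) := (ℝ ∙ u)ᗮ with hK
  have hymem : ∀ i, y i ∈ K := by
    intro i
    rw [hK, Submodule.mem_orthogonal_singleton_iff_inner_right]
    exact horth i
  have hdim : Module.finrank ℝ K = 2 := by
    have h1 : Module.finrank ℝ (ℝ ∙ u) + Module.finrank ℝ (ℝ ∙ u)ᗮ
        = Module.finrank ℝ (EuclideanSpace ℝ (Fin 3)) :=
      Submodule.finrank_add_finrank_orthogonal (ℝ ∙ u)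
    rw [finrank_span_singleton hu0, finrank_euclideanSpace_fin] at h1
    rw [hK]
    omega
  set bK : OrthonormalBasis (Fin 2) ℝ K :=
    (stdOrthonormalBasis ℝ K).reindex (finCongr hdim) with hbK
  set f : K ≃ₗᵢ[ℝ] ℂ := (Complex.isometryOfOrthonormal bK).symm with hf
  set z : Fin 6 → ℂ := fun i => f ⟨y i, hymem i⟩ with hz
  have habs : ∀ i, ‖z i‖ = ‖y i‖ := by
    intro i
    rw [hz]
    rw [f.norm_map]
    rfl
  have hinner' : ∀ i j, ⟪y i, y j⟫ = ((starRingEnd ℂ) (z i) * z j).re := by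
    intro i j
    have h1 : ⟪y i, y j⟫ = ⟪(⟨y i, hymem i⟩ : K), (⟨y j, hymem j⟩ : K)⟫ := rfl
    rw [h1, inner_map_complex f]
    exact congrArg Complex.re (mul_comm _ _)
  set θ : Fin 6 → ℝ := fun i => (z i).arg with hθ
  have hre : ∀ i j, ((starRingEnd ℂ) (z i) * z j).re
      = ‖y i‖ * ‖y j‖ * Real.cos (θ j - θ i) := by
    intro i j
    have e1 : ((starRingEnd ℂ) (z i) * z j).re
        = (z i).re * (z j).re + (z i).im * (z j).im := by
      simp [Complex.mul_re]
    rw [e1, ← Complex.norm_mul_cos_arg (z i), ← Complex.norm_mul_sin_arg (z i),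
      ← Complex.norm_mul_cos_arg (z j), ← Complex.norm_mul_sin_arg (z j),
      habs i, habs j, Real.cos_sub]
    ring
  have hr : ∀ i, ‖y i‖ = Real.sqrt r2 := by
    intro i
    rw [← hnorm2 i, Real.sqrt_sq (norm_nonneg _)]
  have hcos : ∀ i j, i ≠ j → Real.cos (θ i - θ j) < 1/3 := by
    intro i j hij
    have h1 := hinner j i (Ne.symm hij)
    rw [hinner' j i, hre j i] at h1
    rw [hr i, hr j] at h1
    have h2 : Real.sqrt r2 * Real.sqrt r2 = r2 := Real.mul_self_sqrt hr2pos.le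
    rw [show √r2 * √r2 * Real.cos (θ i - θ j) = (√r2 * √r2) * Real.cos (θ i - θ j) by ring, h2] at h1
    by_contra hcge
    push_neg at hcge
    have h3 : r2 * (1/3) ≤ r2 * Real.cos (θ i - θ j) :=
      mul_le_mul_of_nonneg_left hcge hr2pos.le
    linarith
  exact no_six_angles θ (fun i => Complex.arg_mem_Ioc (z i)) hcos

end Main
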